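/- Let u : [0, t_f] → ℝ be continuous, let x0 ∈ ℝ and ψ0 ∈ ℝ, and let x(t) = exp(−α·t − ρ·∫₀ᵗ u) · (x0 + β·∫₀ᵗ exp(α·η + ρ·∫₀^η u)·u(η) dη) and ψ(t) = ψ0·exp(α·t + ρ·∫₀ᵗ u) be the corresponding state and adjoint trajectories. Then the switching function φ(t) = ψ(t)·(β − ρ·x(t)) + 1 satisfies φ(0) = ψ0·(β − ρ·x0) + 1 and φ′(t) = ψ0·α·β·exp(α·t + ρ·∫₀ᵗ u(η) dη) for all t ∈ (0, t_f); in particular, if ψ0 > 0 then φ is strictly increasing and if ψ0 < 0 then φ is strictly decreasing on [0, t_f]. -/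

import Mathlib

open intervalIntegral

set_option maxHeartbeats 1000000

/-- The switching function `φ(t) = ψ(t)·(β − ρ·x(t)) + 1`, built from
the explicit state and adjoint trajectories, satisfies `φ(0) = ψ0·(β − ρ·x0) + 1` and
`φ'(t) = ψ0·α·β·exp(αt + ρ∫₀ᵗ u)` on `(0, t_f)`; in particular it is strictly
increasing on `[0, t_f]` when `ψ0 > 0` and strictly decreasing when `ψ0 < 0`. -/
theorem stmt_5 (α β ρ : ℝ) (hα : 0 < α) (hβ : 0 < β) (hρ : 0 < ρ)
    (tf : ℝ) (htf : 0 < tf) (u : ℝ → ℝ) (hu : ContinuousOn u (Set.Icc 0 tf))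
    (x0 ψ0 : ℝ)
    (x ψ φ : ℝ → ℝ)
    (hx : ∀ t, x t =
      Real.exp (-α * t - ρ * ∫ η in (0:ℝ)..t, u η) *
        (x0 + β * ∫ η in (0:ℝ)..t,
          Real.exp (α * η + ρ * ∫ s in (0:ℝ)..η, u s) * u η))
    (hψ : ∀ t, ψ t = ψ0 * Real.exp (α * t + ρ * ∫ η in (0:ℝ)..t, u η))
    (hφ : ∀ t, φ t = ψ t * (β - ρ * x t) + 1) :
    φ 0 = ψ0 * (β - ρ * x0) + 1 ∧
      (∀ t ∈ Set.Ioo (0:ℝ) tf,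
        HasDerivAt φ (ψ0 * α * β * Real.exp (α * t + ρ * ∫ η in (0:ℝ)..t, u η)) t) ∧
      (0 < ψ0 → StrictMonoOn φ (Set.Icc 0 tf)) ∧
      (ψ0 < 0 → StrictAntiOn φ (Set.Icc 0 tf)) := by
  set U : ℝ → ℝ := fun t => ∫ η in (0:ℝ)..t, u η with hU
  set E : ℝ → ℝ := fun t => Real.exp (α * t + ρ * U t) with hE
  set F : ℝ → ℝ := fun t => ∫ η in (0:ℝ)..t, E η * u η with hF
  -- key identity
  have hkey : ∀ t, φ t = ψ0 * β * E t - ρ * ψ0 * (x0 + β * F t) + 1 := by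
    intro t
    rw [hφ, hψ, hx]
    have : Real.exp (α * t + ρ * U t) * Real.exp (-α * t - ρ * U t) = 1 := by
      rw [← Real.exp_add]; ring_nf; exact Real.exp_zero
    simp only [hE, hF, hU]
    linear_combination (-(ρ * ψ0 * (x0 + β * ∫ η in (0:ℝ)..t, Real.exp (α * η + ρ * ∫ s in (0:ℝ)..η, u s) * u η))) * this
  -- integrability of u on subintervals
  have huint : ∀ t ∈ Set.Icc (0:ℝ) tf, IntervalIntegrable u MeasureTheory.volume 0 t := by
    intro t ht
    apply ContinuousOn.intervalIntegrable
    apply hu.mono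
    rw [Set.uIcc_of_le ht.1]
    exact Set.Icc_subset_Icc le_rfl ht.2
  -- U continuous on Icc
  have hUcont : ContinuousOn U (Set.Icc 0 tf) := by
    rw [← Set.uIcc_of_le htf.le]
    apply intervalIntegral.continuousOn_primitive_interval
    rw [Set.uIcc_of_le htf.le]
    exact hu.integrableOn_Icc
  have hEcont : ContinuousOn E (Set.Icc 0 tf) := by
    apply Real.continuous_exp.comp_continuousOn
    exact ((continuous_const.mul continuous_id).continuousOn).add
      (continuousOn_const.mul hUcont)
  have hEucont : ContinuousOn (fun η => E η * u η) (Set.Icc 0 tf) := hEcont.mul hu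
  have hFcont : ContinuousOn F (Set.Icc 0 tf) := by
    rw [← Set.uIcc_of_le htf.le]
    apply intervalIntegral.continuousOn_primitive_interval
    rw [Set.uIcc_of_le htf.le]
    exact hEucont.integrableOn_Icc
  have hφcont : ContinuousOn φ (Set.Icc 0 tf) := by
    have : ContinuousOn (fun t => ψ0 * β * E t - ρ * ψ0 * (x0 + β * F t) + 1)
        (Set.Icc 0 tf) := by
      exact (((continuousOn_const.mul hEcont).sub
        (continuousOn_const.mul (continuousOn_const.add
          (continuousOn_const.mul hFcont)))).add continuousOn_const)
    exact this.congr fun t ht => hkey t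
  -- derivative
  have hderiv : ∀ t ∈ Set.Ioo (0:ℝ) tf,
      HasDerivAt φ (ψ0 * α * β * E t) t := by
    intro t ht
    have hmem : Set.Icc (0:ℝ) tf ∈ nhds t :=
      Icc_mem_nhds ht.1 ht.2
    have hct : ContinuousAt u t := hu.continuousAt hmem
    have hsm : StronglyMeasurableAtFilter u (nhds t) MeasureTheory.volume := by
      exact ⟨Set.Icc 0 tf, hmem, (hu.aestronglyMeasurable measurableSet_Icc)⟩
    have hUd : HasDerivAt U (u t) t :=
      intervalIntegral.integral_hasDerivAt_right
        (huint t ⟨ht.1.le, ht.2.le⟩) hsm hct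
    have hEd : HasDerivAt E (E t * (α + ρ * u t)) t := by
      have hin : HasDerivAt (fun s => α * s + ρ * U s) (α + ρ * u t) t := by
        have h1 := ((hasDerivAt_id t).const_mul α).add (hUd.const_mul ρ)
        rw [mul_one] at h1
        exact h1
      simpa [hE, mul_comm] using hin.exp
    have hctEu : ContinuousAt (fun η => E η * u η) t :=
      (hEcont.continuousAt hmem).mul hct
    have hsmEu : StronglyMeasurableAtFilter (fun η => E η * u η) (nhds t)
        MeasureTheory.volume :=
      ⟨Set.Icc 0 tf, hmem, (hEucont.aestronglyMeasurable measurableSet_Icc)⟩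
    have hFint : IntervalIntegrable (fun η => E η * u η) MeasureTheory.volume 0 t := by
      apply ContinuousOn.intervalIntegrable
      apply hEucont.mono
      rw [Set.uIcc_of_le ht.1.le]
      exact Set.Icc_subset_Icc le_rfl ht.2.le
    have hFd : HasDerivAt F (E t * u t) t :=
      intervalIntegral.integral_hasDerivAt_right hFint hsmEu hctEu
    have : HasDerivAt (fun s => ψ0 * β * E s - ρ * ψ0 * (x0 + β * F s) + 1)
        (ψ0 * β * (E t * (α + ρ * u t)) - ρ * ψ0 * (β * (E t * u t))) t := by
      exact (((hEd.const_mul (ψ0 * β)).sub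
        (((hFd.const_mul β).const_add x0).const_mul (ρ * ψ0))).add_const 1)
    have heq : ψ0 * β * (E t * (α + ρ * u t)) - ρ * ψ0 * (β * (E t * u t))
        = ψ0 * α * β * E t := by ring
    rw [heq] at this
    exact this.congr_of_eventuallyEq (Filter.eventually_of_mem hmem fun s _ => hkey s)
  refine ⟨?_, ?_, ?_, ?_⟩
  · rw [hkey 0]
    have h0 : U 0 = 0 := intervalIntegral.integral_same
    have hF0 : F 0 = 0 := intervalIntegral.integral_same
    simp [hE, h0, hF0]
    ring
  · intro t ht
    exact hderiv t ht
  · intro hψ0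
    apply StrictMonoOn.mono (s := Set.Icc 0 tf) ?_ le_rfl
    apply strictMonoOn_of_hasDerivWithinAt_pos (convex_Icc 0 tf) hφcont
    · intro t ht
      rw [interior_Icc] at ht
      exact (hderiv t ht).hasDerivWithinAt
    · intro t ht
      rw [interior_Icc] at ht
      positivity
  · intro hψ0
    apply strictAntiOn_of_hasDerivWithinAt_neg (convex_Icc 0 tf) hφcont
    · intro t ht
      rw [interior_Icc] at ht
      exact (hderiv t ht).hasDerivWithinAt
    · intro t ht
      have hE : 0 < E t := Real.exp_pos _
      have h2 : ψ0 * (α * β * E t) < 0 :=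
        mul_neg_of_neg_of_pos hψ0 (by positivity)
      nlinarith [h2]
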